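/- Let $P$ be a real polynomial of degree $n \ge 1$ with equioscillation nodes $0 \le t_0 < \cdots < t_n \le a$ (i.e., $P(t_i) = (-1)^i$). If $t_0 > 0$, then the polynomial $Q(x) = P(x + t_0)$ also satisfies the equioscillation property of modulus 1 on $[0,a]$ (with nodes $t_i - t_0$), and $Q(-1) < P(-1)$. -/

import Mathlib

open Polynomial

/-- if the first equioscillation node `t 0` is positive, then the shifted
polynomial `Q(x) = P(x + t 0)` also equioscillates on `[0,a]` (with nodes `t i - t 0`)
and satisfies `Q(-1) < P(-1)`. -/
theorem stmt_4 (n : ℕ) (hn : 1 ≤ n) (a : ℝ) (P : ℝ[X]) (hdeg : P.natDegree = n)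
    (t : Fin (n + 1) → ℝ) (ht0 : 0 ≤ t 0) (htmono : StrictMono t) (hta : t (Fin.last n) ≤ a)
    (hP : ∀ i : Fin (n + 1), P.eval (t i) = (-1 : ℝ) ^ (i : ℕ))
    (ht0pos : 0 < t 0) (Q : ℝ[X]) (hQ : Q = P.comp (X + C (t 0))) :
    (StrictMono (fun i => t i - t 0) ∧ 0 ≤ t 0 - t 0 ∧ t (Fin.last n) - t 0 ≤ a ∧
      ∀ i : Fin (n + 1), Q.eval (t i - t 0) = (-1 : ℝ) ^ (i : ℕ)) ∧
    Q.eval (-1) < P.eval (-1) := by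
  have hQeval : ∀ x : ℝ, Q.eval x = P.eval (x + t 0) := by
    intro x; simp [hQ, eval_comp]
  refine ⟨⟨fun i j hij => by have := htmono hij; simpa using sub_lt_sub_right this (t 0),
    by simp, by nlinarith [htmono.monotone (Fin.zero_le (Fin.last n))],
    fun i => by rw [hQeval]; simpa using hP i⟩, ?_⟩
  -- Now the main inequality.
  -- Step 1: between consecutive nodes there is a root.
  have hroot : ∀ i : Fin n, ∃ x ∈ Set.Ioo (t i.castSucc) (t i.succ), P.eval x = 0 := by
    intro i
    have hlt : t i.castSucc < t i.succ := htmono Fin.castSucc_lt_succ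
    have hcont : ContinuousOn (fun x => P.eval x) (Set.Icc (t i.castSucc) (t i.succ)) :=
      P.continuous.continuousOn
    have h1 : P.eval (t i.castSucc) = (-1 : ℝ) ^ (i : ℕ) := by
      simpa using hP i.castSucc
    have h2 : P.eval (t i.succ) = (-1 : ℝ) ^ ((i : ℕ) + 1) := by
      simpa using hP i.succ
    rcases Nat.even_or_odd (i : ℕ) with he | ho
    · have h0 : (0:ℝ) ∈ Set.Ioo (P.eval (t i.succ)) (P.eval (t i.castSucc)) := by
        rw [h1, h2, he.neg_one_pow, Odd.neg_one_pow (by simp [Nat.odd_add_one, he])]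
        norm_num
      obtain ⟨x, hx, hx0⟩ := intermediate_value_Ioo' hlt.le hcont h0
      exact ⟨x, hx, hx0⟩
    · have h0 : (0:ℝ) ∈ Set.Ioo (P.eval (t i.castSucc)) (P.eval (t i.succ)) := by
        rw [h1, h2, ho.neg_one_pow, Even.neg_one_pow (by simp [Nat.even_add_one, Nat.not_even_iff_odd.mpr ho])]
        norm_num
      obtain ⟨x, hx, hx0⟩ := intermediate_value_Ioo hlt.le hcont h0
      exact ⟨x, hx, hx0⟩
  choose r hr hr0 using hroot
  have hrmono : StrictMono r := by
    intro i j hij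
    have h1 : (r i) < t i.succ := (hr i).2
    have h2 : t j.castSucc < r j := (hr j).1
    have h3 : t i.succ ≤ t j.castSucc := by
      apply htmono.monotone
      simp only [Fin.le_def, Fin.val_succ, Fin.coe_castSucc]
      exact hij
    linarith
  have hPne : P ≠ 0 := fun h => by
    have := hP 0; simp [h] at this
  have hrgt : ∀ i : Fin n, t 0 < r i := by
    intro i
    have : t 0 ≤ t i.castSucc := htmono.monotone (Fin.zero_le _)
    linarith [(hr i).1]
  -- the finset of roots
  set s : Finset ℝ := Finset.image r Finset.univ with hs
  have hscard : s.card = n := by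
    rw [hs, Finset.card_image_of_injective _ hrmono.injective, Finset.card_univ, Fintype.card_fin]
  have hmem_s : ∀ z ∈ s, t 0 < z := by
    intro z hz
    rw [hs, Finset.mem_image] at hz
    obtain ⟨i, _, rfl⟩ := hz
    exact hrgt i
  have hsub : s.val ≤ P.roots := by
    rw [Multiset.le_iff_count]
    intro x
    by_cases hx : x ∈ s
    · have hx1 : s.val.count x = 1 := Multiset.count_eq_one_of_mem s.nodup hx
      rw [hx1]
      have hx' := hx
      rw [hs, Finset.mem_image] at hx'
      obtain ⟨i, _, rfl⟩ := hx'
      have hmem : r i ∈ P.roots := by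
        rw [mem_roots hPne]
        exact hr0 i
      exact Multiset.one_le_count_iff_mem.2 hmem
    · simp [Multiset.count_eq_zero_of_notMem, hx]
  have hcardroots : Multiset.card P.roots = P.natDegree := by
    refine le_antisymm (P.card_roots' ) ?_
    calc P.natDegree = n := hdeg
      _ = Multiset.card s.val := hscard.symm
      _ ≤ Multiset.card P.roots := Multiset.card_le_card hsub
  have hroots_eq : P.roots = s.val := by
    symm
    exact Multiset.eq_of_le_of_card_le hsub (by rw [hcardroots, hdeg, ← hscard]; rfl)
  have hfact := Polynomial.C_leadingCoeff_mul_prod_multiset_X_sub_C hcardroots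
  -- eval formula
  have heval : ∀ x : ℝ, P.eval x = P.leadingCoeff * ∏ z ∈ s, (x - z) := by
    intro x
    conv_lhs => rw [← hfact, hroots_eq]
    rw [eval_mul, eval_C, Finset.prod_eq_multiset_prod, eval_multiset_prod, Multiset.map_map]
    simp [Function.comp]
  set c : ℝ := P.leadingCoeff * (-1 : ℝ) ^ n with hc
  have heval' : ∀ x : ℝ, P.eval x = c * ∏ z ∈ s, (z - x) := by
    intro x
    rw [heval x]
    have : ∏ z ∈ s, (x - z) = ∏ z ∈ s, ((-1) * (z - x)) := by
      apply Finset.prod_congr rfl; intro z _; ring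
    rw [this, Finset.prod_mul_distrib, Finset.prod_const, hscard, hc]
    ring
  have hsne : s.Nonempty := by
    rw [← Finset.card_pos, hscard]; omega
  have hcpos : 0 < c := by
    have h1 : P.eval (t 0) = 1 := by simpa using hP 0
    rw [heval' (t 0)] at h1
    have hprodpos : 0 < ∏ z ∈ s, (z - t 0) :=
      Finset.prod_pos fun z hz => sub_pos.2 (hmem_s z hz)
    nlinarith
  rw [hQeval, heval' (-1), heval' (-1 + t 0)]
  apply mul_lt_mul_of_pos_left _ hcpos
  apply Finset.prod_lt_prod_of_nonempty _ _ hsne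
  · intro z hz
    have := hmem_s z hz
    linarith
  · intro z hz
    linarith
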